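/- The meet construction preserves non-computability from both sides: let A :⊆ ℕ × Λ₁ ⇉ ℕ and B :⊆ ℕ × Λ₂ ⇉ ℕ be bilayer functions with B total in its public argument (dom_pub(B) = ℕ), and define (A ⊓ B)(⟨m,n⟩ ∣ (c,d)) = ({0} × A(m ∣ c)) ∪ ({1} × B(n ∣ d)). If there is a computable function p : ℕ × ℕ → ℕ with p(m,n) ∈ (A ⊓ B)(⟨m,n⟩ ∣ (c,d)) for all valid inputs, then either A has a computable choice function uniform in its public input, or B does. -/

import Mathlib

/-- the meet `A ⊓ B` of bilayer functions preserves
non-computability from both sides. If `B` is total in its public argument and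
there is a computable `p` with `p m n ∈ (A ⊓ B)(⟨m,n⟩ ∣ (c,d))` for all valid
inputs (outputs coded as pairs `⟨i,k⟩` with `i < 2`), then either `A` or `B`
admits a partial computable choice function uniform in its public input. -/
theorem stmt9 {Λ₁ Λ₂ : Type}
    (Adom : ℕ → Λ₁ → Prop) (Aval : ℕ → Λ₁ → Set ℕ)
    (Bdom : ℕ → Λ₂ → Prop) (Bval : ℕ → Λ₂ → Set ℕ)
    (hBtot : ∀ n : ℕ, ∃ d, Bdom n d)
    (p : ℕ → ℕ → ℕ) (hp : Computable₂ p)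
    (hchoice : ∀ (m n : ℕ) (c : Λ₁) (d : Λ₂), Adom m c → Bdom n d →
      (∃ a ∈ Aval m c, p m n = Nat.pair 0 a) ∨
      (∃ b ∈ Bval n d, p m n = Nat.pair 1 b)) :
    (∃ q : ℕ →. ℕ, Partrec q ∧ ∀ m : ℕ, (∃ c, Adom m c) →
      ∃ y ∈ q m, ∀ c, Adom m c → y ∈ Aval m c) ∨
    (∃ q : ℕ →. ℕ, Partrec q ∧ ∀ n : ℕ, (∃ d, Bdom n d) →
      ∃ y ∈ q n, ∀ d, Bdom n d → y ∈ Bval n d) := by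
  by_cases H : ∀ m : ℕ, (∃ c, Adom m c) → ∃ n, (p m n).unpair.1 = 0
  · left
    refine ⟨fun m => (Nat.rfind (fun n => Part.some (decide ((p m n).unpair.1 = 0)))).map
        (fun n => (p m n).unpair.2), ?_, ?_⟩
    · have hinner : Computable₂ fun m n => (p m n).unpair.2 :=
        (Computable.snd.comp (Computable.unpair.comp
          (hp.comp Computable.fst Computable.snd))).to₂
      have hpred : Computable₂ fun m n => decide ((p m n).unpair.1 = 0) :=
        (((Primrec.eq.comp Primrec.id (Primrec.const 0)).decide.to_comp).comp
          (Computable.fst.comp (Computable.unpair.comp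
            (hp.comp Computable.fst Computable.snd)))).to₂
      exact (Partrec.rfind (hpred.partrec₂)).map hinner
    · intro m hm
      obtain ⟨n, hn⟩ := H m hm
      have hdom : (Nat.rfind (fun n => Part.some (decide ((p m n).unpair.1 = 0)))).Dom := by
        refine Nat.rfind_dom.2 ?_
        exact ⟨n, by simpa using hn, fun _ => trivial⟩
      set n₀ := (Nat.rfind (fun n => Part.some (decide ((p m n).unpair.1 = 0)))).get hdom with hn₀
      have hspec : (p m n₀).unpair.1 = 0 := by
        have := Nat.rfind_spec (Part.get_mem hdom)
        simpa using this
      refine ⟨(p m n₀).unpair.2, Part.mem_map _ (Part.get_mem hdom), ?_⟩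
      intro c hc
      obtain ⟨d, hd⟩ := hBtot n₀
      rcases hchoice m n₀ c d hc hd with ⟨a, ha, he⟩ | ⟨b, _, he⟩
      · rw [he]; simpa using ha
      · exfalso; rw [he] at hspec; simp at hspec
  · right
    push_neg at H
    obtain ⟨m₀, ⟨c₀, hc₀⟩, hm₀⟩ := H
    refine ⟨fun n => Part.some (p m₀ n).unpair.2, ?_, ?_⟩
    · exact Computable.partrec (Computable.snd.comp (Computable.unpair.comp (hp.comp
        (Computable.const m₀) Computable.id)))
    · intro n _
      refine ⟨(p m₀ n).unpair.2, Part.mem_some _, ?_⟩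
      intro d hd
      rcases hchoice m₀ n c₀ d hc₀ hd with ⟨a, _, he⟩ | ⟨b, hb, he⟩
      · exact absurd (by rw [he]; simp) (hm₀ n)
      · rw [he]; simpa using hb
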